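/- Let p be a prime and q = p^e. Let M_0 = (T(a)^r)_{r ∈ [0,q−1], a ∈ 𝔽_q} be the q × q matrix over ℤ_p[ξ_{q−1}] whose rows are indexed by r ∈ {0,1,…,q−1} and columns by a ∈ 𝔽_q, and let M = M_0^{⊗k} be its k-th tensor (Kronecker) power. Then for every vector x with entries in ℚ_p(ξ_{p(q−1)}) and y = Mx, one has ν_p(y) = ν_p(x), where the p-adic valuation of a vector is the minimum of the p-adic valuations of its entries. -/

import Mathlib

open Finset Polynomial

section aux
variable {K : Type*} [Field K]

lemma aux_one (ν : K → WithTop ℚ) (hν_mul : ∀ x y, ν (x * y) = ν x + ν y)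
    (hν_top : ∀ x, ν x = ⊤ ↔ x = 0) : ν 1 = 0 := by
  have h := hν_mul 1 1
  rw [one_mul] at h
  have hne : ν 1 ≠ ⊤ := by simp [hν_top]
  lift ν 1 to ℚ using hne with a
  have : a = a + a := by exact_mod_cast h
  have : a = 0 := by linarith
  exact_mod_cast this

lemma aux_sum (ν : K → WithTop ℚ) (hν_add : ∀ x y, min (ν x) (ν y) ≤ ν (x + y))
    (hν_top : ∀ x, ν x = ⊤ ↔ x = 0) {ι : Type*} (s : Finset ι) (f : ι → K) :
    s.inf (fun i => ν (f i)) ≤ ν (∑ i ∈ s, f i) := by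
  induction s using Finset.cons_induction with
  | empty => simp [(hν_top 0).mpr rfl]
  | cons a s ha ih =>
      rw [Finset.sum_cons, Finset.inf_cons]
      exact (min_le_min le_rfl ih).trans (hν_add _ _)

lemma aux_neg (ν : K → WithTop ℚ) (hν_mul : ∀ x y, ν (x * y) = ν x + ν y)
    (hν_top : ∀ x, ν x = ⊤ ↔ x = 0) (x : K) : ν (-x) = ν x := by
  have hm1 : ν (-1 : K) = 0 := by
    have h := hν_mul (-1) (-1)
    rw [neg_mul_neg, one_mul, aux_one ν hν_mul hν_top] at h
    have hne : ν (-1 : K) ≠ ⊤ := by simp [hν_top]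
    lift ν (-1 : K) to ℚ using hne with a
    have : (0:ℚ) = a + a := by exact_mod_cast h
    have : a = 0 := by linarith
    exact_mod_cast this
  calc ν (-x) = ν ((-1) * x) := by rw [neg_one_mul]
    _ = 0 + ν x := by rw [hν_mul, hm1]
    _ = ν x := zero_add _

lemma aux_inv (ν : K → WithTop ℚ) (hν_mul : ∀ x y, ν (x * y) = ν x + ν y)
    (hν_top : ∀ x, ν x = ⊤ ↔ x = 0) {u : K} (hu : u ≠ 0) (h : ν u = 0) :
    ν u⁻¹ = 0 := by
  have := hν_mul u u⁻¹
  rw [mul_inv_cancel₀ hu, aux_one ν hν_mul hν_top, h, zero_add] at this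
  exact this.symm

lemma aux_pow_eq_one (ν : K → WithTop ℚ) (hν_mul : ∀ x y, ν (x * y) = ν x + ν y)
    (hν_top : ∀ x, ν x = ⊤ ↔ x = 0) {u : K} {m : ℕ} (hm : m ≠ 0) (h : u ^ m = 1) :
    ν u = 0 := by
  have hu : u ≠ 0 := by
    rintro rfl
    rw [zero_pow hm] at h
    exact one_ne_zero h.symm
  have hne : ν u ≠ ⊤ := fun ht => hu ((hν_top u).mp ht)
  lift ν u to ℚ using hne with a ha
  have key : ∀ n : ℕ, ν (u ^ n) = ((n * a : ℚ) : WithTop ℚ) := by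
    intro n
    induction n with
    | zero => simpa using aux_one ν hν_mul hν_top
    | succ n ih =>
        rw [pow_succ, hν_mul, ih, ← ha, ← WithTop.coe_add]
        congr 1
        push_cast
        ring
  have h0 := key m
  rw [h, aux_one ν hν_mul hν_top] at h0
  have : (0:ℚ) = m * a := by exact_mod_cast h0
  have : a = 0 := by
    rcases mul_eq_zero.mp this.symm with h | h
    · exact absurd h (by exact_mod_cast hm)
    · exact h
  exact_mod_cast this

lemma aux_prod_nonneg (ν : K → WithTop ℚ) (hν_mul : ∀ x y, ν (x * y) = ν x + ν y)
    (hν_top : ∀ x, ν x = ⊤ ↔ x = 0) {ι : Type*} (s : Finset ι) (f : ι → K)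
    (h : ∀ i ∈ s, 0 ≤ ν (f i)) : 0 ≤ ν (∏ i ∈ s, f i) := by
  induction s using Finset.cons_induction with
  | empty => simp [aux_one ν hν_mul hν_top]
  | cons a s ha ih =>
      rw [Finset.prod_cons, hν_mul]
      exact add_nonneg (h a (Finset.mem_cons_self a s))
        (ih fun i hi => h i (Finset.mem_cons_of_mem hi))

lemma aux_pow_nonneg (ν : K → WithTop ℚ) (hν_mul : ∀ x y, ν (x * y) = ν x + ν y)
    (hν_top : ∀ x, ν x = ⊤ ↔ x = 0) {u : K} (h : 0 ≤ ν u) (n : ℕ) : 0 ≤ ν (u ^ n) := by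
  induction n with
  | zero => simp [aux_one ν hν_mul hν_top]
  | succ n ih => rw [pow_succ, hν_mul]; exact add_nonneg ih h

lemma aux_mulVec (ν : K → WithTop ℚ) (hν_mul : ∀ x y, ν (x * y) = ν x + ν y)
    (hν_add : ∀ x y, min (ν x) (ν y) ≤ ν (x + y))
    (hν_top : ∀ x, ν x = ⊤ ↔ x = 0)
    {m n : Type*} [Fintype m] [Fintype n]
    (A : Matrix m n K) (hA : ∀ i j, 0 ≤ ν (A i j)) (v : n → K) (i : m) :
    Finset.univ.inf (fun j => ν (v j)) ≤ ν (A.mulVec v i) := by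
  refine le_trans ?_ (aux_sum ν hν_add hν_top Finset.univ (fun j => A i j * v j))
  refine Finset.le_inf fun j _ => ?_
  rw [hν_mul]
  calc Finset.univ.inf (fun j => ν (v j)) ≤ ν (v j) := Finset.inf_le (Finset.mem_univ j)
    _ = 0 + ν (v j) := (zero_add _).symm
    _ ≤ ν (A i j) + ν (v j) := add_le_add (hA i j) le_rfl

lemma aux_coeff_prod (ν : K → WithTop ℚ) (hν_mul : ∀ x y, ν (x * y) = ν x + ν y)
    (hν_add : ∀ x y, min (ν x) (ν y) ≤ ν (x + y))
    (hν_top : ∀ x, ν x = ⊤ ↔ x = 0)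
    {ι : Type*} (s : Finset ι) (P : ι → K[X])
    (h : ∀ i ∈ s, ∀ n, 0 ≤ ν ((P i).coeff n)) :
    ∀ n, 0 ≤ ν ((∏ i ∈ s, P i).coeff n) := by
  induction s using Finset.cons_induction with
  | empty =>
      intro n
      rw [Finset.prod_empty, Polynomial.coeff_one]
      split
      · simp [aux_one ν hν_mul hν_top]
      · simp [(hν_top 0).mpr rfl]
  | cons a s ha ih =>
      intro n
      rw [Finset.prod_cons, Polynomial.coeff_mul]
      refine le_trans ?_ (aux_sum ν hν_add hν_top _ _)
      refine Finset.le_inf fun ij _ => ?_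
      rw [hν_mul]
      exact add_nonneg (h a (Finset.mem_cons_self a s) _)
        (ih (fun i hi => h i (Finset.mem_cons_of_mem hi)) _)

end aux



/-- Let `p` be a prime and `q = p^e`.  Let `M₀ = (T(a)^r)` be the
`q × q` matrix over `ℤ_p[ξ_{q−1}] ⊆ ℚ_p(ξ_{p(q−1)})` with rows indexed by
`r ∈ [0,q−1]` and columns by `a ∈ 𝔽_q`, where `T` is the Teichmüller lift, and let
`M = M₀^{⊗k}` be its `k`-th tensor power (rows indexed by `[0,q−1]^k`, columns by
`𝔽_q^k`, entry `∏_i T(a_i)^{r_i}`).  Then for every vector `x` over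
`ℚ_p(ξ_{p(q−1)})` and `y = Mx`, one has `ν_p(y) = ν_p(x)`, where the `p`-adic
valuation of a vector is the minimum of the valuations of its entries.

Here `ℚ_p(ξ_{p(q−1)})` is realized as `CyclotomicField (p(q−1)) ℚ_[p]`; the
(unique) extension `ν` of the `p`-adic valuation is axiomatized by the hypotheses
`hν_*`, and the Teichmüller lift `T` is axiomatized by the hypotheses `hT*`
(a multiplicative injective section of the residue map whose values are roots of
`X^q − X`). -/
theorem stmt_10 (p e k : ℕ) [Fact p.Prime] (he : 1 ≤ e)
    (hpos : 0 < p * (p ^ e - 1))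
    (F : Type) [Field F] [Fintype F] (hF : Fintype.card F = p ^ e)
    (ν : CyclotomicField (p * (p ^ e - 1)) ℚ_[p] → WithTop ℚ)
    (hν_mul : ∀ x y, ν (x * y) = ν x + ν y)
    (hν_add : ∀ x y, min (ν x) (ν y) ≤ ν (x + y))
    (hν_top : ∀ x, ν x = ⊤ ↔ x = 0)
    (hν_ext : ∀ a : ℚ_[p], a ≠ 0 →
      ν (algebraMap ℚ_[p] (CyclotomicField (p * (p ^ e - 1)) ℚ_[p]) a)
        = ((a.valuation : ℚ) : WithTop ℚ))
    (T : F → CyclotomicField (p * (p ^ e - 1)) ℚ_[p])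
    (hT0 : T 0 = 0)
    (hTmul : ∀ x y, T (x * y) = T x * T y)
    (hTq : ∀ x, T x ^ (p ^ e) = T x)
    (hTinj : Function.Injective T)
    (hTadd : ∀ x y, (0 : WithTop ℚ) < ν (T (x + y) - T x - T y))
    (M : Matrix (Fin k → Fin (p ^ e)) (Fin k → F)
        (CyclotomicField (p * (p ^ e - 1)) ℚ_[p]))
    (hM : ∀ r a, M r a = ∏ i, T (a i) ^ ((r i : ℕ)))
    (x : (Fin k → F) → CyclotomicField (p * (p ^ e - 1)) ℚ_[p]) :
    Finset.univ.inf (fun r => ν (M.mulVec x r)) = Finset.univ.inf (fun a => ν (x a)) := by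
  classical
  have hp : p.Prime := Fact.out
  have hq1 : 1 < p ^ e := Nat.one_lt_pow (by omega) hp.one_lt
  have hν1 : ν 1 = 0 := aux_one ν hν_mul hν_top
  have hT0iff : ∀ a : F, T a = 0 ↔ a = 0 :=
    fun a => ⟨fun h => hTinj (h.trans hT0.symm), fun h => h ▸ hT0⟩
  have hTν : ∀ a : F, a ≠ 0 → ν (T a) = 0 := by
    intro a ha
    have hTa : T a ≠ 0 := fun h => ha ((hT0iff a).mp h)
    have hpow : T a ^ (p ^ e - 1) = 1 := by
      have h2 : T a ^ (p ^ e - 1) * T a = 1 * T a := by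
        rw [one_mul, ← pow_succ, Nat.sub_add_cancel hq1.le]
        exact hTq a
      exact mul_right_cancel₀ hTa h2
    exact aux_pow_eq_one ν hν_mul hν_top (Nat.sub_ne_zero_of_lt hq1) hpow
  have hTν' : ∀ a : F, 0 ≤ ν (T a) := by
    intro a
    by_cases ha : a = 0
    · subst ha; rw [hT0, (hν_top 0).mpr rfl]; exact le_top
    · rw [hTν a ha]
  have hν_sub : ∀ u v, min (ν u) (ν v) ≤ ν (u - v) := by
    intro u v
    rw [sub_eq_add_neg]
    refine le_trans ?_ (hν_add u (-v))
    rw [aux_neg ν hν_mul hν_top]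
  have hTsub : ∀ a b : F, a ≠ b → ν (T a - T b) = 0 := by
    intro a b hab
    have h1 : ν (T (a - b)) = 0 := hTν _ (sub_ne_zero_of_ne hab)
    have h2 := hTadd (a - b) b
    rw [sub_add_cancel] at h2
    have heq : T a - T b = T (a - b) + (T a - T (a - b) - T b) := by ring
    have hge : 0 ≤ ν (T a - T b) := by
      rw [heq]
      refine le_trans ?_ (hν_add _ _)
      rw [h1]
      exact le_min le_rfl h2.le
    by_contra hne
    have hlt : 0 < ν (T a - T b) :=
      lt_of_le_of_ne hge (fun h => hne h.symm)
    have hcontra : 0 < ν (T (a - b)) := by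
      have heq2 : T (a - b) = (T a - T b) - (T a - T (a - b) - T b) := by ring
      rw [heq2]
      exact lt_of_lt_of_le (lt_min hlt h2) (hν_sub _ _)
    rw [h1] at hcontra
    exact lt_irrefl _ hcontra
  have hMν : ∀ r a, 0 ≤ ν (M r a) := by
    intro r a
    rw [hM]
    exact aux_prod_nonneg ν hν_mul hν_top _ _
      (fun i _ => aux_pow_nonneg ν hν_mul hν_top (hTν' (a i)) _)
  set B : F → Polynomial (CyclotomicField (p * (p ^ e - 1)) ℚ_[p]) :=
    fun a => Lagrange.basis Finset.univ T a with hB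
  have hInj : Set.InjOn T ↑(Finset.univ : Finset F) := hTinj.injOn
  have hdeg : ∀ a, (B a).natDegree < p ^ e := by
    intro a
    rw [hB, Lagrange.natDegree_basis hInj (Finset.mem_univ a), Finset.card_univ, hF]
    omega
  have hBν : ∀ a n, 0 ≤ ν ((B a).coeff n) := by
    intro a
    refine aux_coeff_prod ν hν_mul hν_add hν_top _ _ ?_
    intro b hb n
    have hb' : b ≠ a := (Finset.mem_erase.mp hb).1
    have hab : T a - T b ≠ 0 :=
      sub_ne_zero_of_ne (fun h => hb' (hTinj h).symm)
    have h0 : ν ((T a - T b)⁻¹) = 0 :=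
      aux_inv ν hν_mul hν_top hab (hTsub a b hb'.symm)
    rw [Lagrange.basisDivisor, Polynomial.coeff_C_mul, hν_mul, h0, zero_add]
    rcases n with _ | _ | n <;>
      simp [Polynomial.coeff_sub, Polynomial.coeff_X, Polynomial.coeff_C,
        aux_neg ν hν_mul hν_top, hTν', hν1, (hν_top 0).mpr rfl]
  have key : ∀ a c : F,
      (∑ j : Fin (p ^ e), (B a).coeff (j : ℕ) * T c ^ (j : ℕ)) = if a = c then 1 else 0 := by
    intro a c
    have h1 : (∑ j : Fin (p ^ e), (B a).coeff (j : ℕ) * T c ^ (j : ℕ)) =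
        ∑ j ∈ Finset.range (p ^ e), (B a).coeff j * T c ^ j :=
      Fin.sum_univ_eq_sum_range (fun j => (B a).coeff j * T c ^ j) (p ^ e)
    rw [h1, ← Polynomial.eval_eq_sum_range' (hdeg a) (T c)]
    by_cases hac : a = c
    · subst hac
      rw [if_pos rfl, hB, Lagrange.eval_basis_self hInj (Finset.mem_univ a)]
    · rw [if_neg hac, hB, Lagrange.eval_basis_of_ne hac (Finset.mem_univ c)]
  set N : Matrix (Fin k → F) (Fin k → Fin (p ^ e))
      (CyclotomicField (p * (p ^ e - 1)) ℚ_[p]) :=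
    fun a r => ∏ i, (B (a i)).coeff (r i) with hN
  have hNν : ∀ a r, 0 ≤ ν (N a r) := by
    intro a r
    rw [hN]
    exact aux_prod_nonneg ν hν_mul hν_top _ _ (fun i _ => hBν (a i) (r i))
  have hNM : N * M = 1 := by
    ext a c
    rw [Matrix.mul_apply, Matrix.one_apply]
    calc ∑ r : Fin k → Fin (p ^ e), N a r * M r c
        = ∑ r : Fin k → Fin (p ^ e),
            ∏ i, ((B (a i)).coeff (r i) * T (c i) ^ ((r i : ℕ))) := by
          refine Finset.sum_congr rfl fun r _ => ?_
          rw [hN, hM, ← Finset.prod_mul_distrib]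
      _ = ∏ i, ∑ j : Fin (p ^ e), (B (a i)).coeff (j : ℕ) * T (c i) ^ (j : ℕ) := by
          rw [Finset.prod_univ_sum (fun _ => (Finset.univ : Finset (Fin (p ^ e))))
            (fun i j => (B (a i)).coeff (j : ℕ) * T (c i) ^ (j : ℕ)),
            Fintype.piFinset_univ]
      _ = ∏ i, (if a i = c i then (1 : CyclotomicField (p * (p ^ e - 1)) ℚ_[p]) else 0) :=
          Finset.prod_congr rfl fun i _ => key (a i) (c i)
      _ = if a = c then 1 else 0 := by
          by_cases h : a = c
          · subst h; simp
          · rw [if_neg h]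
            obtain ⟨i, hi⟩ := Function.ne_iff.mp h
            exact Finset.prod_eq_zero (Finset.mem_univ i) (if_neg hi)
  have hx_eq : ∀ a, N.mulVec (M.mulVec x) a = x a := by
    intro a
    rw [Matrix.mulVec_mulVec, hNM, Matrix.one_mulVec]
  apply le_antisymm
  · refine Finset.le_inf fun a _ => ?_
    rw [← hx_eq a]
    exact aux_mulVec ν hν_mul hν_add hν_top N hNν (M.mulVec x) a
  · refine Finset.le_inf fun r _ => ?_
    exact aux_mulVec ν hν_mul hν_add hν_top M hMν x r
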